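/- For every l ∈ ℤ, the coefficient of z^m in P_{κ,a;l} vanishes for all m > l + |κ|, and the coefficient of z^{l+|κ|} in P_{κ,a;l} equals (∏_{j=1}^n a_j)·(∏_{1≤i<j≤n}(k_j − k_i))·(∏_{i=1}^n (l − k_i)) (the Vandermonde determinant of the nodes k_1,…,k_n,l times ∏ a_j). In particular this leading coefficient is nonzero if and only if l ∉ {k_1,…,k_n}. -/

import Mathlib

/-- The derivation `D = z·d/dz` on Laurent polynomials: `D(z^m) = m·z^m`. -/
noncomputable def Dop (P : LaurentPolynomial ℂ) : LaurentPolynomial ℂ :=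
  Finsupp.sum (AddMonoidAlgebra.coeff P) fun m c => LaurentPolynomial.C ((m : ℂ) * c) * LaurentPolynomial.T m

/-- `Φ_k(a;z) = a·z^k + a⁻¹·z^{−k}`. -/
noncomputable def PhiL (k : ℕ) (a : ℂ) : LaurentPolynomial ℂ :=
  LaurentPolynomial.C a * LaurentPolynomial.T (k : ℤ) +
    LaurentPolynomial.C a⁻¹ * LaurentPolynomial.T (-(k : ℤ))

/-- `W_{κ,a}`: the determinant of the `n×n` matrix with `(i,j)` entry `D^{i−1}Φ_{k_j}(a_j;z)`. -/
noncomputable def Wka (n : ℕ) (k : Fin n → ℕ) (a : Fin n → ℂ) : LaurentPolynomial ℂ :=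
  Matrix.det (Matrix.of fun i j : Fin n => Dop^[(i : ℕ)] (PhiL (k j) (a j)))

/-- The exceptional Laurent orthogonal polynomial `P_{κ,a;l}`: the determinant of the
`(n+1)×(n+1)` matrix with `(i,j)` entry `D^{i−1}Φ_{k_j}(a_j;z)` for `j ≤ n` and
`D^{i−1}z^l` in the last column. -/
noncomputable def Pka (n : ℕ) (k : Fin n → ℕ) (a : Fin n → ℂ) (l : ℤ) : LaurentPolynomial ℂ :=
  Matrix.det (Matrix.of fun i j : Fin (n + 1) =>
    Fin.lastCases (Dop^[(i : ℕ)] (LaurentPolynomial.T l))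
      (fun j' => Dop^[(i : ℕ)] (PhiL (k j') (a j'))) j)

section Aux
open LaurentPolynomial Finset

lemma Dop_single (m : ℤ) (c : ℂ) : Dop (C c * T m) = C ((m : ℂ) * c) * T m := by
  rw [← single_eq_C_mul_T, Dop, AddMonoidAlgebra.coeff_single, Finsupp.sum_single_index (by simp)]

lemma Dop_add (P Q : LaurentPolynomial ℂ) : Dop (P + Q) = Dop P + Dop Q := by
  rw [Dop, Dop, Dop, AddMonoidAlgebra.coeff_add, Finsupp.sum_add_index]
  · intro m _; simp
  · intro m _ b₁ b₂; rw [← add_mul, ← map_add, mul_add]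

lemma Dop_iter_single (i : ℕ) (m : ℤ) (c : ℂ) :
    Dop^[i] (C c * T m) = C ((m : ℂ) ^ i * c) * T m := by
  induction i with
  | zero => simp
  | succ i ih =>
    rw [Function.iterate_succ_apply', ih, Dop_single]
    ring_nf

lemma Dop_iter_zero (i : ℕ) : Dop^[i] (0 : LaurentPolynomial ℂ) = 0 := by
  induction i with
  | zero => simp
  | succ i ih => simp only [Function.iterate_succ_apply]; rw [show Dop 0 = 0 by simp [Dop], ih]

lemma Dop_iter_add (i : ℕ) (P Q : LaurentPolynomial ℂ) :
    Dop^[i] (P + Q) = Dop^[i] P + Dop^[i] Q := by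
  induction i generalizing P Q with
  | zero => simp
  | succ i ih => simp only [Function.iterate_succ_apply, Dop_add, ih]

lemma Ioi_last (n : ℕ) : (Finset.Ioi (Fin.last n)) = (∅ : Finset (Fin (n+1))) := by
  ext j
  simp [Finset.mem_Ioi, Fin.lt_iff_val_lt_val, Fin.le_last, Nat.not_lt.2 (Nat.lt_succ_iff.1 j.isLt)]

lemma Ioi_castSucc' {n : ℕ} (i : Fin n) :
    (Finset.Ioi i.castSucc : Finset (Fin (n+1))) =
      insert (Fin.last n) ((Finset.Ioi i).map Fin.castSuccEmb) := by
  ext j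
  simp only [Finset.mem_Ioi, Finset.mem_insert, Finset.mem_map, Fin.coe_castSuccEmb]
  constructor
  · intro h
    by_cases hj : j = Fin.last n
    · exact Or.inl hj
    · refine Or.inr ⟨j.castPred hj, ?_, Fin.castSucc_castPred j hj⟩
      rw [← Fin.castSucc_lt_castSucc_iff, Fin.castSucc_castPred]
      exact h
  · rintro (rfl | ⟨a, ha, rfl⟩)
    · exact Fin.castSucc_lt_last i
    · exact Fin.castSucc_lt_castSucc_iff.2 ha

lemma vsplit (n : ℕ) (w : Fin n → ℂ) (x : ℂ) :
    (∏ i : Fin (n+1), ∏ j ∈ Finset.Ioi i,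
        ((Fin.lastCases x w j : ℂ) - Fin.lastCases x w i)) =
      (∏ i : Fin n, ∏ j ∈ Finset.Ioi i, (w j - w i)) * ∏ i : Fin n, (x - w i) := by
  rw [Fin.prod_univ_castSucc, Ioi_last, Finset.prod_empty, mul_one]
  rw [← Finset.prod_mul_distrib]
  refine Finset.prod_congr rfl fun i _ => ?_
  have hnot : Fin.last n ∉ (Finset.Ioi i).map Fin.castSuccEmb := by
    simp only [Finset.mem_map, Fin.coe_castSuccEmb, not_exists]
    rintro a ⟨-, h⟩
    exact (Fin.castSucc_lt_last a).ne h
  rw [Ioi_castSucc', Finset.prod_insert hnot, Finset.prod_map]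
  simp only [Fin.coe_castSuccEmb, Fin.lastCases_last, Fin.lastCases_castSucc]
  ring

noncomputable def cfn (n : ℕ) (a : Fin n → ℂ) (j : Fin (n+1)) (b : Bool) : ℂ :=
  Fin.lastCases (if b then 1 else 0) (fun j' => if b then a j' else (a j')⁻¹) j

def exn (n : ℕ) (k : Fin n → ℕ) (l : ℤ) (j : Fin (n+1)) (b : Bool) : ℤ :=
  Fin.lastCases l (fun j' => if b then (k j' : ℤ) else -(k j' : ℤ)) j

lemma T_sum {α : Type*} (s : Finset α) (e : α → ℤ) :
    (T (∑ j ∈ s, e j) : LaurentPolynomial ℂ) = ∏ j ∈ s, T (e j) := by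
  classical
  induction s using Finset.induction with
  | empty => simp [T_zero]
  | insert _ _ h ih => rw [Finset.sum_insert h, Finset.prod_insert h, T_add, ih]

lemma key (n : ℕ) (k : Fin n → ℕ) (a : Fin n → ℂ) (l : ℤ) :
    Pka n k a l = ∑ r : Fin (n+1) → Bool,
      C ((∏ j, cfn n a j (r j)) *
          ∏ i : Fin (n+1), ∏ j ∈ Finset.Ioi i,
            ((exn n k l j (r j) : ℂ) - (exn n k l i (r i) : ℂ))) *
        T (∑ j, exn n k l j (r j)) := by
  have h1 : Pka n k a l = Matrix.det (Matrix.of fun (jj ii : Fin (n+1)) =>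
      ∑ b : Bool, Dop^[(ii : ℕ)] (C (cfn n a jj b) * T (exn n k l jj b))) := by
    rw [Pka, ← Matrix.det_transpose]
    congr 1
    ext jj ii
    simp only [Matrix.transpose_apply, Matrix.of_apply, Fintype.sum_bool]
    induction jj using Fin.lastCases with
    | last =>
      simp [cfn, exn, Dop_iter_zero]
    | cast j' =>
      simp [cfn, exn, PhiL, Dop_iter_add]
  rw [h1]
  have h2 : Matrix.det (Matrix.of fun (jj ii : Fin (n+1)) =>
      ∑ b : Bool, Dop^[(ii : ℕ)] (C (cfn n a jj b) * T (exn n k l jj b))) =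
      ∑ r : Fin (n+1) → Bool, Matrix.det (Matrix.of fun (jj ii : Fin (n+1)) =>
        Dop^[(ii : ℕ)] (C (cfn n a jj (r jj)) * T (exn n k l jj (r jj)))) := by
    have := (Matrix.detRowAlternating (R := LaurentPolynomial ℂ)
      (n := Fin (n+1))).toMultilinearMap.map_sum
      (g := fun jj b => fun ii : Fin (n+1) =>
        Dop^[(ii : ℕ)] (C (cfn n a jj b) * T (exn n k l jj b)))
    convert this using 2 <;> rfl
  rw [h2]
  refine Finset.sum_congr rfl fun r _ => ?_
  have h3 : (Matrix.of fun (jj ii : Fin (n+1)) =>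
      Dop^[(ii : ℕ)] (C (cfn n a jj (r jj)) * T (exn n k l jj (r jj)))) =
      Matrix.of fun jj ii => (C (cfn n a jj (r jj)) * T (exn n k l jj (r jj))) *
        ((C.mapMatrix (Matrix.vandermonde fun j => (exn n k l j (r j) : ℂ))) jj ii) := by
    ext jj ii
    simp only [Matrix.of_apply, Dop_iter_single, RingHom.mapMatrix_apply, Matrix.map_apply,
      Matrix.vandermonde_apply]
    rw [map_mul, map_pow]
    ring
  rw [h3, Matrix.det_mul_column, ← RingHom.map_det, Matrix.det_vandermonde]
  rw [Finset.prod_mul_distrib, ← map_prod, ← T_sum, map_mul]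
  ring

lemma coeff_formula (n : ℕ) (k : Fin n → ℕ) (a : Fin n → ℂ) (l : ℤ) (m : ℤ) :
    AddMonoidAlgebra.coeff (Pka n k a l) m = ∑ r : Fin (n+1) → Bool,
      if (∑ j, exn n k l j (r j)) = m then
        (∏ j, cfn n a j (r j)) *
          ∏ i : Fin (n+1), ∏ j ∈ Finset.Ioi i,
            ((exn n k l j (r j) : ℂ) - (exn n k l i (r i) : ℂ))
      else 0 := by
  rw [key]
  rw [AddMonoidAlgebra.coeff_sum, Finsupp.finset_sum_apply]
  refine Finset.sum_congr rfl fun r _ => ?_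
  rw [← single_eq_C_mul_T, AddMonoidAlgebra.coeff_single, Finsupp.single_apply]

lemma exn_le (n : ℕ) (k : Fin n → ℕ) (l : ℤ) (j' : Fin n) (b : Bool) :
    exn n k l j'.castSucc b ≤ (k j' : ℤ) := by
  cases b <;> simp [exn]

lemma sum_exn_le (n : ℕ) (k : Fin n → ℕ) (l : ℤ) (r : Fin (n+1) → Bool) :
    (∑ j, exn n k l j (r j)) ≤ l + ∑ i : Fin n, (k i : ℤ) := by
  rw [Fin.sum_univ_castSucc]
  have h1 : exn n k l (Fin.last n) (r (Fin.last n)) = l := by simp [exn]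
  have h2 : ∑ j' : Fin n, exn n k l j'.castSucc (r j'.castSucc) ≤ ∑ i : Fin n, (k i : ℤ) :=
    Finset.sum_le_sum fun j' _ => exn_le n k l j' _
  omega

end Aux

/-- Evaluation of a Laurent polynomial at `z ∈ ℂ`. -/
noncomputable def evalL (P : LaurentPolynomial ℂ) (z : ℂ) : ℂ :=
  Finsupp.sum (AddMonoidAlgebra.coeff P) fun m c => c * z ^ m

/-- The dagger operation: `(Σ c_m z^m)† = Σ conj(c_m)·z^{−m}`. -/
noncomputable def dag (P : LaurentPolynomial ℂ) : LaurentPolynomial ℂ :=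
  Finsupp.sum (AddMonoidAlgebra.coeff P) fun m c => LaurentPolynomial.C ((starRingEnd ℂ) c) * LaurentPolynomial.T (-m)

/-- The set `Z_κ` of zeros of `W_{κ,a}` in `ℂ\{0}`. -/
def Zka (n : ℕ) (k : Fin n → ℕ) (a : Fin n → ℂ) : Set ℂ :=
  {z | z ≠ 0 ∧ evalL (Wka n k a) z = 0}

/-- The multiplicity of `z₀ ≠ 0` as a zero of the Laurent polynomial `W`, computed as the
root multiplicity of `z₀` in a polynomial representative `f'` with `toLaurent f' = W · T^d`. -/
noncomputable def multL (W : LaurentPolynomial ℂ) (z₀ : ℂ) : ℕ :=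
  Polynomial.rootMultiplicity z₀ (W.exists_T_pow).choose_spec.choose

/-- `ψ` is quasi-invariant at `x₀` with multiplicity `m`: `(x−x₀)^m·ψ(x)` extends
analytically across `x₀` and all its odd-order derivatives of orders `1,3,…,2m−1`
vanish at `x₀`. -/
def QuasiInv (ψ : ℂ → ℂ) (x₀ : ℂ) (m : ℕ) : Prop :=
  ∃ F : ℂ → ℂ, AnalyticAt ℂ F x₀ ∧
    (∀ᶠ x in nhdsWithin x₀ {x₀}ᶜ, F x = (x - x₀) ^ m * ψ x) ∧
    ∀ j : ℕ, 1 ≤ j → j ≤ m → iteratedDeriv (2 * j - 1) F x₀ = 0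

/-- `Q_κ`: Laurent polynomials `P` such that `Φ(x) = P(e^{ix})/W_{κ,a}(e^{ix})` is
quasi-invariant at every point `x_j ∈ ℂ` with `e^{ix_j} ∈ Z_κ`, with the multiplicity of
the corresponding zero. -/
def Qka (n : ℕ) (k : Fin n → ℕ) (a : Fin n → ℂ) : Set (LaurentPolynomial ℂ) :=
  {P | ∀ x₀ : ℂ, Complex.exp (Complex.I * x₀) ∈ Zka n k a →
    QuasiInv (fun x => evalL P (Complex.exp (Complex.I * x)) /
        evalL (Wka n k a) (Complex.exp (Complex.I * x))) x₀
      (multL (Wka n k a) (Complex.exp (Complex.I * x₀)))}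

/-- `Q_{κ,C}`: as `Q_κ`, but quasi-invariance is required only at real points `x_j ∈ ℝ`. -/
def QkaC (n : ℕ) (k : Fin n → ℕ) (a : Fin n → ℂ) : Set (LaurentPolynomial ℂ) :=
  {P | ∀ x₀ : ℝ, Complex.exp (Complex.I * (x₀ : ℂ)) ∈ Zka n k a →
    QuasiInv (fun x => evalL P (Complex.exp (Complex.I * x)) /
        evalL (Wka n k a) (Complex.exp (Complex.I * x))) (x₀ : ℂ)
      (multL (Wka n k a) (Complex.exp (Complex.I * (x₀ : ℂ))))}

/-- `μ > 0` is admissible for the bilinear form if `μ ≠ |z_i|` for every zero `z_i ∈ Z_κ`. -/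
def AdmMu (n : ℕ) (k : Fin n → ℕ) (a : Fin n → ℂ) (μ : ℝ) : Prop :=
  0 < μ ∧ ∀ z ∈ Zka n k a, μ ≠ ‖z‖

/-- The complex bilinear form `(P,Q) = (1/2πi)·∮_{|z|=μ} P(z)·Q(z)·W_{κ,a}(z)^{−2}·dz/z`. -/
noncomputable def formB (n : ℕ) (k : Fin n → ℕ) (a : Fin n → ℂ) (μ : ℝ)
    (P Q : LaurentPolynomial ℂ) : ℂ :=
  (2 * Real.pi * Complex.I)⁻¹ *
    ∮ z in C(0, μ), evalL P z * evalL Q z / ((evalL (Wka n k a) z) ^ 2 * z)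

/-- `μ > 0` is admissible for the Hermitian form if `1 < max(μ, 1/μ) < ν`, where
`ν = min{|z_i| : z_i ∈ Z_κ, |z_i| > 1}` (`ν = +∞` if no such zero exists). -/
def AdmMuH (n : ℕ) (k : Fin n → ℕ) (a : Fin n → ℂ) (μ : ℝ) : Prop :=
  0 < μ ∧ 1 < max μ μ⁻¹ ∧
    ∀ z ∈ Zka n k a, 1 < ‖z‖ → max μ μ⁻¹ < ‖z‖

/-- The sesquilinear product
`⟨P,Q⟩_L = (1/2πi)·∮_{|z|=μ} P(z)·Q†(z)·(W_{κ,a}(z)·W_{κ,a}†(z))⁻¹·dz/z`. -/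
noncomputable def formH (n : ℕ) (k : Fin n → ℕ) (a : Fin n → ℂ) (μ : ℝ)
    (P Q : LaurentPolynomial ℂ) : ℂ :=
  (2 * Real.pi * Complex.I)⁻¹ *
    ∮ z in C(0, μ), evalL P z * evalL (dag Q) z /
      (evalL (Wka n k a) z * evalL (dag (Wka n k a)) z * z)

/-- the coefficient of `z^m` in `P_{κ,a;l}` vanishes for `m > l + |κ|`, the
coefficient of `z^{l+|κ|}` equals `(∏ a_j)·(∏_{i<j}(k_j − k_i))·(∏_i (l − k_i))`, and this
leading coefficient is nonzero iff `l ∉ {k_1,…,k_n}`. -/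
theorem stmt_10 (n : ℕ) (k : Fin n → ℕ) (hk : StrictAnti k) (hkpos : ∀ j, 0 < k j)
    (a : Fin n → ℂ) (ha : ∀ j, a j ≠ 0) (l : ℤ) :
    (∀ m : ℤ, l + ∑ i : Fin n, (k i : ℤ) < m → AddMonoidAlgebra.coeff (Pka n k a l) m = 0) ∧
      AddMonoidAlgebra.coeff (Pka n k a l) (l + ∑ i : Fin n, (k i : ℤ)) =
        (∏ j : Fin n, a j) *
          (∏ i : Fin n, ∏ j ∈ Finset.Ioi i, ((k j : ℂ) - (k i : ℂ))) *
          ∏ i : Fin n, ((l : ℂ) - (k i : ℂ)) ∧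
      (AddMonoidAlgebra.coeff (Pka n k a l) (l + ∑ i : Fin n, (k i : ℤ)) ≠ 0 ↔ ∀ i, l ≠ (k i : ℤ)) := by

  have hvanish : ∀ m : ℤ, l + ∑ i : Fin n, (k i : ℤ) < m → AddMonoidAlgebra.coeff (Pka n k a l) m = 0 := by
    intro m hm
    rw [coeff_formula]
    refine Finset.sum_eq_zero fun r _ => ?_
    rw [if_neg]
    intro h
    exact absurd (h ▸ sum_exn_le n k l r) (not_le.2 hm)
  have hlead : AddMonoidAlgebra.coeff (Pka n k a l) (l + ∑ i : Fin n, (k i : ℤ)) =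
      (∏ j : Fin n, a j) *
        (∏ i : Fin n, ∏ j ∈ Finset.Ioi i, ((k j : ℂ) - (k i : ℂ))) *
        ∏ i : Fin n, ((l : ℂ) - (k i : ℂ)) := by
    rw [coeff_formula]
    rw [Finset.sum_eq_single_of_mem (fun _ => true) (Finset.mem_univ _)]
    · rw [if_pos]
      · have hx : ∀ j : Fin (n+1), ((exn n k l j true : ℤ) : ℂ) =
            Fin.lastCases (l : ℂ) (fun j' => (k j' : ℂ)) j := by
          intro j
          induction j using Fin.lastCases with
          | last => simp [exn]
          | cast j' => simp [exn]
        have hcf : (∏ j : Fin (n+1), cfn n a j true) = ∏ j' : Fin n, a j' := by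
          rw [Fin.prod_univ_castSucc]
          simp [cfn]
        rw [hcf]
        have hV : (∏ i : Fin (n+1), ∏ j ∈ Finset.Ioi i,
            ((exn n k l j true : ℂ) - (exn n k l i true : ℂ))) =
            (∏ i : Fin n, ∏ j ∈ Finset.Ioi i, ((k j : ℂ) - (k i : ℂ))) *
              ∏ i : Fin n, ((l : ℂ) - (k i : ℂ)) := by
          simp_rw [hx]
          exact vsplit n (fun j' => (k j' : ℂ)) (l : ℂ)
        rw [hV]; ring
      · rw [Fin.sum_univ_castSucc]
        simp only [exn, Fin.lastCases_last, Fin.lastCases_castSucc, if_true]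
        omega
    · intro r _ hr
      have : ∃ j, r j = false := by
        by_contra h
        push_neg at h
        exact hr (funext fun j => by
          cases hj : r j
          · exact absurd hj (h j)
          · rfl)
      obtain ⟨j, hj⟩ := this
      induction j using Fin.lastCases with
      | last =>
        have : (∏ j : Fin (n+1), cfn n a j (r j)) = 0 := by
          refine Finset.prod_eq_zero (Finset.mem_univ (Fin.last n)) ?_
          rw [hj]
          simp [cfn]
        rw [this, zero_mul]
        split <;> rfl
      | cast j' =>
        rw [if_neg]
        intro h
        have hlt : (∑ j'' : Fin n, exn n k l j''.castSucc (r j''.castSucc)) <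
            ∑ i : Fin n, (k i : ℤ) := by
          refine Finset.sum_lt_sum (fun i _ => exn_le n k l i _) ⟨j', Finset.mem_univ _, ?_⟩
          simp only [exn, Fin.lastCases_castSucc, hj, Bool.false_eq_true, if_false]
          have := hkpos j'
          omega
        rw [Fin.sum_univ_castSucc] at h
        simp only [exn, Fin.lastCases_last, Fin.lastCases_castSucc] at h hlt
        omega
  refine ⟨hvanish, hlead, ?_⟩
  rw [hlead]
  have h1 : (∏ j : Fin n, a j) ≠ 0 := Finset.prod_ne_zero_iff.2 fun j _ => ha j
  have h2 : (∏ i : Fin n, ∏ j ∈ Finset.Ioi i, ((k j : ℂ) - (k i : ℂ))) ≠ 0 := by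
    refine Finset.prod_ne_zero_iff.2 fun i _ => Finset.prod_ne_zero_iff.2 fun j hj => ?_
    rw [sub_ne_zero]
    have : k j < k i := hk (Finset.mem_Ioi.1 hj)
    exact_mod_cast this.ne
  constructor
  · intro h i hi
    apply h
    rw [mul_eq_zero]
    right
    refine Finset.prod_eq_zero (Finset.mem_univ i) ?_
    rw [hi]
    push_cast
    ring
  · intro h
    refine mul_ne_zero (mul_ne_zero h1 h2) (Finset.prod_ne_zero_iff.2 fun i _ => ?_)
    rw [sub_ne_zero]
    intro hc
    apply h i
    have : ((l : ℂ)) = ((k i : ℤ) : ℂ) := by push_cast; exact hc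
    exact_mod_cast this
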